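/- The Read–Bajraktarević operator R is an Edelstein contraction on C_e(I) with respect to the metric d_C: for all h, g ∈ C_e(I) with h ≠ g, one has d_C(Rh, Rg) < d_C(h, g). -/

import Mathlib

/-- The Read–Bajraktarević operator is an Edelstein contraction on `C_e(I)` with
respect to the sup-Manhattan metric `d_C`. -/
theorem RB_Edelstein
    (N : ℕ) (hN : 0 < N)
    (t v w : ℕ → ℝ)
    (htmono : ∀ j, j < N → t j < t (j + 1))
    (a fc : ℕ → ℝ) (L : ℕ → ℝ → ℝ)
    (hL : ∀ j, 1 ≤ j → j ≤ N → ∀ x : ℝ, L j x = a j * x + fc j)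
    (ha : ∀ j, 1 ≤ j → j ≤ N → a j ≠ 0 ∧ |a j| < 1)
    (hL0 : ∀ j, 1 ≤ j → j ≤ N → L j (t 0) = t (j - 1))
    (hLN : ∀ j, 1 ≤ j → j ≤ N → L j (t N) = t j)
    (b c d e p q : ℕ → ℝ → ℝ)
    (hLip : ∀ j, 1 ≤ j → j ≤ N → ∀ g ∈ ([b j, c j, d j, e j, p j, q j] : List (ℝ → ℝ)),
      ∃ Kg : NNReal, LipschitzOnWith Kg g (Set.Icc (t 0) (t N)))
    (hbd : ∀ j, 1 ≤ j → j ≤ N → ∃ B D : ℝ, B + D ≤ 1 ∧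
      (∀ x ∈ Set.Icc (t 0) (t N), |b j x| ≤ B) ∧ (∀ x ∈ Set.Icc (t 0) (t N), |d j x| ≤ D))
    (hce : ∀ j, 1 ≤ j → j ≤ N → ∃ C E : ℝ, C + E ≤ 1 ∧
      (∀ x ∈ Set.Icc (t 0) (t N), |c j x| ≤ C) ∧ (∀ x ∈ Set.Icc (t 0) (t N), |e j x| ≤ E))
    (s r : ℕ → ℝ → ℝ)
    (hs : ∀ j, 1 ≤ j → j ≤ N → ∀ x y : ℝ, x ≠ y → |s j x - s j y| < |x - y|)
    (hr : ∀ j, 1 ≤ j → j ≤ N → ∀ x y : ℝ, x ≠ y → |r j x - r j y| < |x - y|)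
    (F : ℕ → ℝ → ℝ × ℝ → ℝ × ℝ)
    (hF : ∀ j x vw, F j x vw = (b j x * s j vw.1 + c j x * r j vw.2 + p j x,
                                d j x * s j vw.1 + e j x * r j vw.2 + q j x))
    (hF0 : ∀ j, 1 ≤ j → j ≤ N → F j (t 0) (v 0, w 0) = (v (j - 1), w (j - 1)))
    (hFN : ∀ j, 1 ≤ j → j ≤ N → F j (t N) (v N, w N) = (v j, w j))
    (h g : ℝ → ℝ × ℝ)
    (hhc : ContinuousOn h (Set.Icc (t 0) (t N)))
    (hgc : ContinuousOn g (Set.Icc (t 0) (t N)))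
    (hh0 : h (t 0) = (v 0, w 0)) (hhN : h (t N) = (v N, w N))
    (hg0 : g (t 0) = (v 0, w 0)) (hgN : g (t N) = (v N, w N))
    (hne : ∃ x ∈ Set.Icc (t 0) (t N), h x ≠ g x)
    (Rh Rg : ℝ → ℝ × ℝ)
    (hRhc : ContinuousOn Rh (Set.Icc (t 0) (t N)))
    (hRgc : ContinuousOn Rg (Set.Icc (t 0) (t N)))
    (hRh : ∀ j, 1 ≤ j → j ≤ N → ∀ x ∈ Set.Icc (t 0) (t N), Rh (L j x) = F j x (h x))
    (hRg : ∀ j, 1 ≤ j → j ≤ N → ∀ x ∈ Set.Icc (t 0) (t N), Rg (L j x) = F j x (g x)) :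
    (⨆ x : Set.Icc (t 0) (t N), (|(Rh x.1).1 - (Rg x.1).1| + |(Rh x.1).2 - (Rg x.1).2|)) <
      ⨆ x : Set.Icc (t 0) (t N), (|(h x.1).1 - (g x.1).1| + |(h x.1).2 - (g x.1).2|) := by

  set I := Set.Icc (t 0) (t N) with hIdef
  -- monotonicity of t
  have tmono : ∀ i k : ℕ, i ≤ k → k ≤ N → t i ≤ t k := by
    intro i k hik hkN
    induction k with
    | zero => simp [Nat.le_zero.mp hik]
    | succ n ih =>
      rcases Nat.lt_or_ge i (n + 1) with h1 | h1
      · exact le_trans (ih (Nat.lt_succ_iff.mp h1) (le_trans (Nat.le_succ n) hkN))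
          (le_of_lt (htmono n (Nat.lt_of_succ_le hkN)))
      · have : i = n + 1 := le_antisymm hik h1
        simp [this]
  have t0N : t 0 < t N := by
    obtain ⟨m, hm⟩ : ∃ m, N = m + 1 := ⟨N - 1, (Nat.succ_pred_eq_of_pos hN).symm⟩
    calc t 0 ≤ t m := tmono 0 m (Nat.zero_le m) (by omega)
      _ < t (m + 1) := htmono m (by omega)
      _ = t N := by rw [hm]
  have ht0I : t 0 ∈ I := ⟨le_refl _, le_of_lt t0N⟩
  haveI : Nonempty I := ⟨⟨t 0, ht0I⟩⟩
  -- the two Manhattan distance functions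
  set ψ : ℝ → ℝ := fun y => |(h y).1 - (g y).1| + |(h y).2 - (g y).2| with hψdef
  set f : ℝ → ℝ := fun y => |(Rh y).1 - (Rg y).1| + |(Rh y).2 - (Rg y).2| with hfdef
  have hψc : ContinuousOn ψ I := ((hhc.fst.sub hgc.fst).abs).add ((hhc.snd.sub hgc.snd).abs)
  have hfc : ContinuousOn f I := ((hRhc.fst.sub hRgc.fst).abs).add ((hRhc.snd.sub hRgc.snd).abs)
  set M : ℝ := ⨆ x : I, ψ x.1 with hMdef
  have hBdd : BddAbove (Set.range fun x : I => ψ x.1) := by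
    have : (Set.range fun x : I => ψ x.1) = ψ '' I := by
      ext z; constructor
      · rintro ⟨⟨x, hx⟩, rfl⟩; exact ⟨x, hx, rfl⟩
      · rintro ⟨x, hx, rfl⟩; exact ⟨⟨x, hx⟩, rfl⟩
    rw [this]
    exact (isCompact_Icc.image_of_continuousOn hψc).bddAbove
  have hMle : ∀ x ∈ I, ψ x ≤ M := fun x hx => le_ciSup hBdd ⟨x, hx⟩
  have hMpos : 0 < M := by
    obtain ⟨x0, hx0, hne0⟩ := hne
    have hψ0 : 0 < ψ x0 := by
      by_contra hc
      push_neg at hc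
      have h1 : |(h x0).1 - (g x0).1| = 0 := by
        have := abs_nonneg ((h x0).1 - (g x0).1)
        have := abs_nonneg ((h x0).2 - (g x0).2)
        simp only [hψdef] at hc
        linarith
      have h2 : |(h x0).2 - (g x0).2| = 0 := by
        have := abs_nonneg ((h x0).1 - (g x0).1)
        have := abs_nonneg ((h x0).2 - (g x0).2)
        simp only [hψdef] at hc
        linarith
      exact hne0 (Prod.ext (by have := abs_eq_zero.mp h1; linarith)
        (by have := abs_eq_zero.mp h2; linarith))
    exact lt_of_lt_of_le hψ0 (hMle x0 hx0)
  -- Edelstein maps are 1-Lipschitz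
  have hsle : ∀ j, 1 ≤ j → j ≤ N → ∀ x y : ℝ, |s j x - s j y| ≤ |x - y| := by
    intro j hj1 hjN x y
    by_cases hxy : x = y
    · simp [hxy]
    · exact le_of_lt (hs j hj1 hjN x y hxy)
  have hrle : ∀ j, 1 ≤ j → j ≤ N → ∀ x y : ℝ, |r j x - r j y| ≤ |x - y| := by
    intro j hj1 hjN x y
    by_cases hxy : x = y
    · simp [hxy]
    · exact le_of_lt (hr j hj1 hjN x y hxy)
  -- covering lemma
  have cover : ∀ y ∈ I, ∃ j, 1 ≤ j ∧ j ≤ N ∧ t (j - 1) ≤ y ∧ y ≤ t j := by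
    rintro y ⟨hy0, hyN⟩
    have aux : ∀ n, 1 ≤ n → n ≤ N → y ≤ t n →
        ∃ j, 1 ≤ j ∧ j ≤ n ∧ t (j - 1) ≤ y ∧ y ≤ t j := by
      intro n
      induction n with
      | zero => intro h1; omega
      | succ m ih =>
        intro _ hmN hyt
        rcases Nat.eq_zero_or_pos m with hm0 | hm1
        · subst hm0
          exact ⟨1, le_refl _, le_refl _, by simpa using hy0, hyt⟩
        · by_cases hym : y ≤ t m
          · obtain ⟨j, hj1, hjm, hjl, hjr⟩ := ih hm1 (by omega) hym
            exact ⟨j, hj1, by omega, hjl, hjr⟩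
          · exact ⟨m + 1, by omega, le_refl _, by simpa using le_of_not_ge hym, hyt⟩
    obtain ⟨j, hj1, hjn, hl, hr'⟩ := aux N hN (le_refl _) hyN
    exact ⟨j, hj1, hjn, hl, hr'⟩
  -- maximize f on I
  obtain ⟨ystar, hyI, hymax⟩ := isCompact_Icc.exists_isMaxOn ⟨t 0, ht0I⟩ hfc
  have hmax : ∀ x ∈ I, f x ≤ f ystar := fun x hx => hymax hx
  have hsup_le : (⨆ x : I, f x.1) ≤ f ystar := ciSup_le fun x => hmax x.1 x.2
  -- key strict inequality at the maximizer
  have hkey : f ystar < M := by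
    obtain ⟨j, hj1, hjN, hyl, hyr⟩ := cover ystar hyI
    have ea : a j * t 0 + fc j = t (j - 1) := by
      rw [← hL j hj1 hjN (t 0)]; exact hL0 j hj1 hjN
    have eb : a j * t N + fc j = t j := by
      rw [← hL j hj1 hjN (t N)]; exact hLN j hj1 hjN
    have tlt : t (j - 1) < t j := by
      have := htmono (j - 1) (by omega)
      rwa [Nat.sub_add_cancel hj1] at this
    have haj : 0 < a j := by nlinarith
    set x : ℝ := (ystar - fc j) / a j with hxdef
    have hax : a j * x = ystar - fc j := by
      rw [hxdef]; field_simp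
    have hLx : L j x = ystar := by
      rw [hL j hj1 hjN x, hax]; ring
    have hxI : x ∈ I := by
      constructor
      · nlinarith
      · nlinarith
    have hRhy : Rh ystar = F j x (h x) := by rw [← hLx]; exact hRh j hj1 hjN x hxI
    have hRgy : Rg ystar = F j x (g x) := by rw [← hLx]; exact hRg j hj1 hjN x hxI
    set Δs : ℝ := s j (h x).1 - s j (g x).1 with hΔs
    set Δr : ℝ := r j (h x).2 - r j (g x).2 with hΔr
    have hfval : f ystar = |b j x * Δs + c j x * Δr| + |d j x * Δs + e j x * Δr| := by
      simp only [hfdef, hRhy, hRgy, hF, hΔs, hΔr]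
      ring_nf
    obtain ⟨B, D, hBD, hB, hD⟩ := hbd j hj1 hjN
    obtain ⟨C, E, hCE, hC, hE⟩ := hce j hj1 hjN
    have hb := hB x hxI
    have hd := hD x hxI
    have hc := hC x hxI
    have he := hE x hxI
    have hkey2 : f ystar ≤ |Δs| + |Δr| := by
      rw [hfval]
      have h1 : |b j x * Δs + c j x * Δr| ≤ |b j x| * |Δs| + |c j x| * |Δr| :=
        (abs_add_le _ _).trans (by rw [abs_mul, abs_mul])
      have h2 : |d j x * Δs + e j x * Δr| ≤ |d j x| * |Δs| + |e j x| * |Δr| :=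
        (abs_add_le _ _).trans (by rw [abs_mul, abs_mul])
      nlinarith [abs_nonneg Δs, abs_nonneg Δr, abs_nonneg (b j x), abs_nonneg (c j x),
        abs_nonneg (d j x), abs_nonneg (e j x),
        mul_nonneg (sub_nonneg.2 hb) (abs_nonneg Δs),
        mul_nonneg (sub_nonneg.2 hd) (abs_nonneg Δs),
        mul_nonneg (sub_nonneg.2 hc) (abs_nonneg Δr),
        mul_nonneg (sub_nonneg.2 he) (abs_nonneg Δr),
        mul_nonneg (sub_nonneg.2 hBD) (abs_nonneg Δs),
        mul_nonneg (sub_nonneg.2 hCE) (abs_nonneg Δr)]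
    by_cases hhg : h x = g x
    · have hΔs0 : Δs = 0 := by rw [hΔs, hhg]; ring
      have hΔr0 : Δr = 0 := by rw [hΔr, hhg]; ring
      have : f ystar ≤ 0 := by rw [hΔs0, hΔr0] at hkey2; simpa using hkey2
      linarith
    · have hcomp : (h x).1 ≠ (g x).1 ∨ (h x).2 ≠ (g x).2 := by
        by_contra hcc
        push_neg at hcc
        exact hhg (Prod.ext hcc.1 hcc.2)
      have hlt : |Δs| + |Δr| < ψ x := by
        rcases hcomp with h1 | h2
        · have hs' : |Δs| < |(h x).1 - (g x).1| := hs j hj1 hjN _ _ h1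
          have hr' : |Δr| ≤ |(h x).2 - (g x).2| := hrle j hj1 hjN _ _
          simp only [hψdef]; linarith
        · have hs' : |Δs| ≤ |(h x).1 - (g x).1| := hsle j hj1 hjN _ _
          have hr' : |Δr| < |(h x).2 - (g x).2| := hr j hj1 hjN _ _ h2
          simp only [hψdef]; linarith
      calc f ystar ≤ |Δs| + |Δr| := hkey2
        _ < ψ x := hlt
        _ ≤ M := hMle x hxI
  calc (⨆ x : I, f x.1) ≤ f ystar := hsup_le
    _ < M := hkey
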